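/- Let X and Y be sets, H = ℓ²(X), K = ℓ²(Y), and let U : ℓ²(X) → ℓ²(Y) be an isometry. Define Φ(a) = U a U* for a ∈ B(ℓ²(X)). For x ∈ X, y ∈ Y, and δ > 0, set Y_{x,δ} = {y : ‖Φ(e_{xx}) e_{yy} Φ(1)‖ > δ} and X_{y,δ} = {x : ‖U* e_{yy} U e_{xx}‖ > δ}, where e_{zz} denotes the rank-one projection onto the basis vector δ_z. Then y ∈ Y_{x,δ} iff x ∈ X_{y,δ}, and moreover |Y_{x,δ}| ≤ δ⁻² for all x and |X_{y,δ}| ≤ δ⁻² for all y. -/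

import Mathlib

open ContinuousLinearMap
open scoped ENNReal

noncomputable section

local notation "⟪" x ", " y "⟫" => @inner ℂ _ _ x y

/-- The standard basis vector `δ_x` of `ℓ²(X)`. -/
def deltaVec (X : Type*) [DecidableEq X] (x : X) : lp (fun _ : X => ℂ) 2 := lp.single 2 x 1

/-- The rank-one orthogonal projection `e_{xx}` onto `ℂ δ_x` in `ℓ²(X)`. -/
def ee (X : Type*) [DecidableEq X] (x : X) : lp (fun _ : X => ℂ) 2 →L[ℂ] lp (fun _ : X => ℂ) 2 :=
  (innerSL ℂ (deltaVec X x)).smulRight (deltaVec X x)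

theorem count_aux {ι : Type*} (g : ι → ℝ)
    (hs : Summable (fun i => g i ^ 2)) (h1 : ∑' i, g i ^ 2 ≤ 1)
    (δ : ℝ) (hδ : 0 < δ) (f : ι → ℝ) (hfg : ∀ i, f i ≤ g i) :
    {i | δ < f i}.Finite ∧ (Nat.card {i | δ < f i} : ℝ) ≤ δ⁻¹ ^ 2 := by
  have hsub : {i | δ < f i} ⊆ {i | δ ^ 2 ≤ g i ^ 2} := by
    intro i hi
    have h2 : δ < g i := lt_of_lt_of_le hi (hfg i)
    exact le_of_lt (pow_lt_pow_left₀ h2 hδ.le (by norm_num))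
  have hfinG : {i | δ ^ 2 ≤ g i ^ 2}.Finite := by
    have h0 : (0:ℝ) < δ ^ 2 := by positivity
    have hev : ∀ᶠ i in Filter.cofinite, g i ^ 2 < δ ^ 2 :=
      hs.tendsto_cofinite_zero.eventually (gt_mem_nhds h0)
    have := Filter.eventually_cofinite.mp (hev.mono fun i hi => not_le.mpr hi)
    simpa using this
  have hfin : {i | δ < f i}.Finite := hfinG.subset hsub
  refine ⟨hfin, ?_⟩
  have hcard : (Nat.card {i | δ < f i} : ℝ) ≤ (Nat.card {i | δ ^ 2 ≤ g i ^ 2} : ℝ) := by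
    rw [Nat.card_coe_set_eq, Nat.card_coe_set_eq]
    exact_mod_cast Set.ncard_le_ncard hsub hfinG
  set t := hfinG.toFinset with ht
  have hkey : (t.card : ℝ) * δ ^ 2 ≤ 1 := by
    calc (t.card : ℝ) * δ ^ 2 = ∑ _i ∈ t, δ ^ 2 := by
          rw [Finset.sum_const, nsmul_eq_mul]
      _ ≤ ∑ i ∈ t, g i ^ 2 := by
          refine Finset.sum_le_sum fun i hi => ?_
          exact (hfinG.mem_toFinset.mp hi)
      _ ≤ ∑' i, g i ^ 2 := Summable.sum_le_tsum t (fun i _ => by positivity) hs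
      _ ≤ 1 := h1
  have hcard2 : (Nat.card {i | δ ^ 2 ≤ g i ^ 2} : ℝ) = (t.card : ℝ) := by
    rw [Nat.card_coe_set_eq, Set.ncard_eq_toFinset_card _ hfinG]
  have hδ2 : (0:ℝ) < δ ^ 2 := by positivity
  have hlast : (t.card : ℝ) ≤ (δ ^ 2)⁻¹ := by
    rw [← one_div]
    exact (le_div_iff₀ hδ2).mpr hkey
  calc (Nat.card {i | δ < f i} : ℝ) ≤ (t.card : ℝ) := by rw [← hcard2]; exact hcard
    _ ≤ (δ ^ 2)⁻¹ := hlast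
    _ = δ⁻¹ ^ 2 := by rw [inv_pow]

theorem deltaVec_norm (X : Type*) [DecidableEq X] (x : X) : ‖deltaVec X x‖ = 1 := by
  have := lp.norm_single (p := 2) (E := fun _ : X => ℂ)
    (by norm_num : (0:ℝ≥0∞) < 2) x (1:ℂ)
  simpa [deltaVec] using this

theorem lp_summable_sq {Y : Type*} (f : lp (fun _ : Y => ℂ) 2) :
    Summable (fun y => ‖f y‖ ^ 2) := by
  have hm := lp.memℓp f
  have hs := (memℓp_gen_iff (p := 2) (by norm_num : 0 < (2:ℝ≥0∞).toReal)).1 hm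
  have he : (fun y : Y => ‖f y‖ ^ ((2:ℝ≥0∞).toReal)) = fun y => ‖f y‖ ^ 2 := by
    funext y
    rw [show ((2:ℝ≥0∞).toReal) = ((2:ℕ):ℝ) by norm_num, Real.rpow_natCast]
  rwa [he] at hs

theorem lp_tsum_sq {Y : Type*} (f : lp (fun _ : Y => ℂ) 2) :
    ∑' y, ‖f y‖ ^ 2 = ‖f‖ ^ 2 := by
  have h := lp.norm_rpow_eq_tsum (p := 2) (by norm_num : 0 < (2:ℝ≥0∞).toReal) f
  have e : ∀ (r : ℝ), r ^ ((2:ℝ≥0∞).toReal) = r ^ 2 := fun r => by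
    rw [show ((2:ℝ≥0∞).toReal) = ((2:ℕ):ℝ) by norm_num, Real.rpow_natCast]
  simp only [e] at h
  exact h.symm

set_option maxHeartbeats 1000000 in
/-- Let `U : ℓ²(X) → ℓ²(Y)` be an isometry, `Φ(a) = U a U*`, `Ψ(b) = U* b U`.  With
`Y_{x,δ} = {y : ‖Φ(e_xx) e_yy Φ(1)‖ > δ}` and `X_{y,δ} = {x : ‖Ψ(e_yy) e_xx‖ > δ}`,
we have `y ∈ Y_{x,δ} ↔ x ∈ X_{y,δ}`, and both sets are finite of cardinality `≤ δ⁻²`. -/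
theorem roe_localization_sets {X Y : Type*} [DecidableEq X] [DecidableEq Y]
    (U : lp (fun _ : X => ℂ) 2 →L[ℂ] lp (fun _ : Y => ℂ) 2)
    (hU : ∀ f, ‖U f‖ = ‖f‖) (δ : ℝ) (hδ : 0 < δ) :
    (∀ (x : X) (y : Y),
        δ < ‖(U ∘L ee X x ∘L adjoint U) ∘L ee Y y ∘L
              (U ∘L ContinuousLinearMap.id ℂ _ ∘L adjoint U)‖ ↔
        δ < ‖(adjoint U ∘L ee Y y ∘L U) ∘L ee X x‖) ∧
    (∀ x : X,
      Set.Finite {y : Y | δ < ‖(U ∘L ee X x ∘L adjoint U) ∘L ee Y y ∘L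
          (U ∘L ContinuousLinearMap.id ℂ _ ∘L adjoint U)‖} ∧
      (Nat.card {y : Y | δ < ‖(U ∘L ee X x ∘L adjoint U) ∘L ee Y y ∘L
          (U ∘L ContinuousLinearMap.id ℂ _ ∘L adjoint U)‖} : ℝ) ≤ δ⁻¹ ^ 2) ∧
    (∀ y : Y,
      Set.Finite {x : X | δ < ‖(adjoint U ∘L ee Y y ∘L U) ∘L ee X x‖} ∧
      (Nat.card {x : X | δ < ‖(adjoint U ∘L ee Y y ∘L U) ∘L ee X x‖} : ℝ) ≤ δ⁻¹ ^ 2) := by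
  have hnormR : ∀ (x : X) (y : Y),
      ‖(adjoint U ∘L ee Y y ∘L U) ∘L ee X x‖ =
        ‖⟪adjoint U (deltaVec Y y), deltaVec X x⟫‖ * ‖adjoint U (deltaVec Y y)‖ := by
    intro x y
    have hop : (adjoint U ∘L ee Y y ∘L U) ∘L ee X x =
        (innerSL ℂ (deltaVec X x)).smulRight
          (⟪adjoint U (deltaVec Y y), deltaVec X x⟫ • adjoint U (deltaVec Y y)) := by
      refine ContinuousLinearMap.ext fun f => ?_
      simp only [comp_apply, ee, smulRight_apply, innerSL_apply_apply, map_smul,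
        inner_smul_right, smul_smul, adjoint_inner_left]
    rw [hop, norm_smulRight_apply, innerSL_apply_norm, deltaVec_norm, one_mul, norm_smul]
  have hnormL : ∀ (x : X) (y : Y),
      ‖(U ∘L ee X x ∘L adjoint U) ∘L ee Y y ∘L
          (U ∘L ContinuousLinearMap.id ℂ _ ∘L adjoint U)‖ =
        ‖⟪adjoint U (deltaVec Y y), deltaVec X x⟫‖ * ‖adjoint U (deltaVec Y y)‖ := by
    intro x y
    have hop : (U ∘L ee X x ∘L adjoint U) ∘L ee Y y ∘L
        (U ∘L ContinuousLinearMap.id ℂ _ ∘L adjoint U) =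
        (innerSL ℂ (U (adjoint U (deltaVec Y y)))).smulRight
          (⟪deltaVec X x, adjoint U (deltaVec Y y)⟫ • U (deltaVec X x)) := by
      refine ContinuousLinearMap.ext fun g => ?_
      have h : ⟪deltaVec Y y, U (adjoint U g)⟫ = ⟪U (adjoint U (deltaVec Y y)), g⟫ := by
        rw [← adjoint_inner_left U (adjoint U g) (deltaVec Y y), adjoint_inner_right]
      simp only [comp_apply, coe_id', id_eq, ee, smulRight_apply, innerSL_apply_apply, map_smul,
        inner_smul_right, smul_smul, h]
    rw [hop, norm_smulRight_apply, innerSL_apply_norm, hU, norm_smul, hU, deltaVec_norm,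
      mul_one, norm_inner_symm, mul_comm]
  have hUle : ‖U‖ ≤ 1 := opNorm_le_bound _ zero_le_one fun f => by rw [hU f, one_mul]
  have hadj : ∀ y : Y, ‖adjoint U (deltaVec Y y)‖ ≤ 1 := by
    intro y
    have h1 : ‖adjoint U (deltaVec Y y)‖ ≤ ‖adjoint U‖ * ‖deltaVec Y y‖ := le_opNorm _ _
    have h2 : ‖adjoint U‖ = ‖U‖ := (ContinuousLinearMap.adjoint (𝕜 := ℂ)).norm_map U
    rw [h2, deltaVec_norm, mul_one] at h1
    exact h1.trans hUle
  refine ⟨fun x y => by rw [hnormL, hnormR], fun x => ?_, fun y => ?_⟩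
  · -- fixed x : count over y
    have hsum := lp_summable_sq (U (deltaVec X x))
    have htsum : ∑' y : Y, ‖(U (deltaVec X x) : lp (fun _ : Y => ℂ) 2) y‖ ^ 2 ≤ 1 := by
      rw [lp_tsum_sq, hU, deltaVec_norm]; norm_num
    have hle : ∀ y : Y,
        ‖⟪adjoint U (deltaVec Y y), deltaVec X x⟫‖ * ‖adjoint U (deltaVec Y y)‖ ≤
          ‖(U (deltaVec X x) : lp (fun _ : Y => ℂ) 2) y‖ := by
      intro y
      have hinner : ⟪adjoint U (deltaVec Y y), deltaVec X x⟫ =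
          (U (deltaVec X x) : lp (fun _ : Y => ℂ) 2) y := by
        rw [adjoint_inner_left]
        simpa [deltaVec] using lp.inner_single_left (𝕜 := ℂ) y (1:ℂ) (U (deltaVec X x))
      calc ‖⟪adjoint U (deltaVec Y y), deltaVec X x⟫‖ * ‖adjoint U (deltaVec Y y)‖ ≤
            ‖⟪adjoint U (deltaVec Y y), deltaVec X x⟫‖ * 1 := by
            gcongr; exact hadj y
        _ = ‖(U (deltaVec X x) : lp (fun _ : Y => ℂ) 2) y‖ := by rw [mul_one, hinner]
    have hmain := count_aux (fun y : Y => ‖(U (deltaVec X x) : lp (fun _ : Y => ℂ) 2) y‖)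
      hsum htsum δ hδ
      (fun y => ‖⟪adjoint U (deltaVec Y y), deltaVec X x⟫‖ * ‖adjoint U (deltaVec Y y)‖) hle
    simpa only [hnormL] using hmain
  · -- fixed y : count over x
    have hsum := lp_summable_sq (adjoint U (deltaVec Y y))
    have htsum : ∑' x : X, ‖(adjoint U (deltaVec Y y) : lp (fun _ : X => ℂ) 2) x‖ ^ 2 ≤ 1 := by
      rw [lp_tsum_sq]
      exact pow_le_one₀ (norm_nonneg _) (hadj y)
    have hle : ∀ x : X,
        ‖⟪adjoint U (deltaVec Y y), deltaVec X x⟫‖ * ‖adjoint U (deltaVec Y y)‖ ≤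
          ‖(adjoint U (deltaVec Y y) : lp (fun _ : X => ℂ) 2) x‖ := by
      intro x
      have hinner : ⟪adjoint U (deltaVec Y y), deltaVec X x⟫ =
          starRingEnd ℂ ((adjoint U (deltaVec Y y) : lp (fun _ : X => ℂ) 2) x) := by
        simpa [deltaVec] using
          lp.inner_single_right (𝕜 := ℂ) x (1:ℂ) (adjoint U (deltaVec Y y))
      calc ‖⟪adjoint U (deltaVec Y y), deltaVec X x⟫‖ * ‖adjoint U (deltaVec Y y)‖ ≤
            ‖⟪adjoint U (deltaVec Y y), deltaVec X x⟫‖ * 1 := by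
            gcongr; exact hadj y
        _ = ‖(adjoint U (deltaVec Y y) : lp (fun _ : X => ℂ) 2) x‖ := by
            rw [mul_one, hinner, RCLike.norm_conj]
    have hmain := count_aux
      (fun x : X => ‖(adjoint U (deltaVec Y y) : lp (fun _ : X => ℂ) 2) x‖) hsum htsum δ hδ
      (fun x => ‖⟪adjoint U (deltaVec Y y), deltaVec X x⟫‖ * ‖adjoint U (deltaVec Y y)‖) hle
    simpa only [hnormR] using hmain

end
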